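/- For r = 3 and m ≥ 73, every pair (m,f) with 0 < f < C(m,3) satisfies σ_3(m,f) ≤ 13/25. -/

import Mathlib

open Finset
open scoped Classical

/-- `(n,e) →_r (m,f)`: every `r`-uniform hypergraph on `n` vertices with `e` edges
has an induced sub-hypergraph on `m` vertices with exactly `f` edges. -/
def PairArrows (r n e m f : ℕ) : Prop :=
  ∀ G : Finset (Finset (Fin n)), (∀ s ∈ G, s.card = r) → G.card = e →
    ∃ S : Finset (Fin n), S.card = m ∧ (G.filter (fun t => t ⊆ S)).card = f

/-- The density `σ_r(m,f)`. -/
noncomputable def sigmaR (r m f : ℕ) : ℝ :=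
  Filter.limsup
    (fun n : ℕ =>
      (((Finset.range (n.choose r + 1)).filter (fun e => PairArrows r n e m f)).card : ℝ) /
        (n.choose r : ℝ))
    Filter.atTop

def E5 (a b c d e : ℕ) : ℕ :=
  a*b*c + a*b*d + a*b*e + a*c*d + a*c*e + a*d*e + b*c*d + b*c*e + b*d*e + c*d*e

lemma compStep {m W R : ℕ}
    (ih : ∀ a0 a1 a2 a3 a4 : ℕ, a0+a1+a2+a3+a4 = m →
      a0^2+a1^2+a2^2+a3^2+a4^2 ≤ W → 12 * E5 a0 a1 a2 a3 a4 < R)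
    (x y c d e : ℕ) (hxy : x + 2 ≤ y) (hs : x+y+c+d+e = m)
    (hq : x^2+y^2+c^2+d^2+e^2 ≤ W+1) : 12 * E5 x y c d e < R := by
  obtain ⟨z, rfl⟩ : ∃ z, y = z+1 := ⟨y-1, by omega⟩
  have hz : x + 1 ≤ z := by omega
  have hsq : (x+1)^2 + z^2 + c^2 + d^2 + e^2 ≤ W := by nlinarith
  have h := ih (x+1) z c d e (by omega) hsq
  have hmono : E5 x (z+1) c d e ≤ E5 (x+1) z c d e := by
    have h1 : x*(z+1) ≤ (x+1)*z := by nlinarith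
    have h2 : x*(z+1)*(c+d+e) ≤ (x+1)*z*(c+d+e) := Nat.mul_le_mul_right _ h1
    unfold E5; nlinarith [h2]
  omega

lemma bal0 (v m : ℕ) (h : m = 5*v) (hm : 73 ≤ m) :
    12 * (10*v^3) < m*(m-1)*(m-2) := by
  subst h
  have hv : 15 ≤ v := by omega
  zify [show 1 ≤ 5*v by omega, show 2 ≤ 5*v by omega]
  have hv' : (15:ℤ) ≤ (v:ℤ) := by exact_mod_cast hv
  nlinarith [hv', sq_nonneg ((v:ℤ))]

lemma bal1 (v m : ℕ) (h : m = 5*v+1) (hm : 73 ≤ m) :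
    12 * (10*v^3 + 6*v^2) < m*(m-1)*(m-2) := by
  subst h
  have hv : 15 ≤ v := by omega
  zify [show 1 ≤ 5*v+1 by omega, show 2 ≤ 5*v+1 by omega]
  have hv' : (15:ℤ) ≤ (v:ℤ) := by exact_mod_cast hv
  nlinarith [hv', sq_nonneg ((v:ℤ))]

lemma bal2 (v m : ℕ) (h : m = 5*v+2) (hm : 73 ≤ m) :
    12 * (10*v^3 + 12*v^2 + 3*v) < m*(m-1)*(m-2) := by
  subst h
  have hv : 15 ≤ v := by omega
  zify [show 1 ≤ 5*v+2 by omega, show 2 ≤ 5*v+2 by omega]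
  have hv' : (15:ℤ) ≤ (v:ℤ) := by exact_mod_cast hv
  nlinarith [hv', sq_nonneg ((v:ℤ))]

lemma bal3 (v m : ℕ) (h : m = 5*v+3) (hm : 73 ≤ m) :
    12 * (10*v^3 + 18*v^2 + 9*v + 1) < m*(m-1)*(m-2) := by
  subst h
  have hv : 14 ≤ v := by omega
  zify [show 1 ≤ 5*v+3 by omega, show 2 ≤ 5*v+3 by omega]
  have hv' : (14:ℤ) ≤ (v:ℤ) := by exact_mod_cast hv
  nlinarith [hv', sq_nonneg ((v:ℤ)), mul_le_mul_of_nonneg_right hv' (sq_nonneg (v:ℤ)), mul_le_mul_of_nonneg_right hv' (by positivity : (0:ℤ) ≤ (v:ℤ))]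

lemma bal4 (v m : ℕ) (h : m = 5*v+4) (hm : 73 ≤ m) :
    12 * (10*v^3 + 24*v^2 + 18*v + 4) < m*(m-1)*(m-2) := by
  subst h
  have hv : 14 ≤ v := by omega
  zify [show 1 ≤ 5*v+4 by omega, show 2 ≤ 5*v+4 by omega]
  have hv' : (14:ℤ) ≤ (v:ℤ) := by exact_mod_cast hv
  nlinarith [hv', sq_nonneg ((v:ℤ)), mul_le_mul_of_nonneg_right hv' (sq_nonneg (v:ℤ)), mul_le_mul_of_nonneg_right hv' (by positivity : (0:ℤ) ≤ (v:ℤ))]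

lemma bal5 (v m : ℕ) (h : m = 5*v+5) (hm : 73 ≤ m) :
    12 * (10*v^3 + 30*v^2 + 30*v + 10) < m*(m-1)*(m-2) := by
  subst h
  have hv : 14 ≤ v := by omega
  zify [show 1 ≤ 5*v+5 by omega, show 2 ≤ 5*v+5 by omega]
  have hv' : (14:ℤ) ≤ (v:ℤ) := by exact_mod_cast hv
  nlinarith [hv', sq_nonneg ((v:ℤ)), mul_le_mul_of_nonneg_right hv' (sq_nonneg (v:ℤ))]

set_option maxHeartbeats 2000000 in
lemma key5 (m : ℕ) (hm : 73 ≤ m) : ∀ W a0 a1 a2 a3 a4 : ℕ, a0+a1+a2+a3+a4 = m →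
    a0^2+a1^2+a2^2+a3^2+a4^2 ≤ W → 12 * E5 a0 a1 a2 a3 a4 < m*(m-1)*(m-2) := by
  intro W
  induction W with
  | zero =>
    intro a0 a1 a2 a3 a4 hs hq
    have h0 : a0 ≤ a0^2 := Nat.le_self_pow (by norm_num) _
    have h1 : a1 ≤ a1^2 := Nat.le_self_pow (by norm_num) _
    have h2 : a2 ≤ a2^2 := Nat.le_self_pow (by norm_num) _
    have h3 : a3 ≤ a3^2 := Nat.le_self_pow (by norm_num) _
    have h4 : a4 ≤ a4^2 := Nat.le_self_pow (by norm_num) _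
    omega
  | succ W ih =>
    intro a0 a1 a2 a3 a4 hs hq
    by_cases h01 : a0 + 2 ≤ a1
    · have h' := compStep ih a0 a1 a2 a3 a4 h01 (by linarith) (by linarith)
      have hE : E5 a0 a1 a2 a3 a4 = E5 a0 a1 a2 a3 a4 := by unfold E5; ring
      rwa [hE] at h'
    by_cases h02 : a0 + 2 ≤ a2
    · have h' := compStep ih a0 a2 a1 a3 a4 h02 (by linarith) (by linarith)
      have hE : E5 a0 a2 a1 a3 a4 = E5 a0 a1 a2 a3 a4 := by unfold E5; ring
      rwa [hE] at h'
    by_cases h03 : a0 + 2 ≤ a3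
    · have h' := compStep ih a0 a3 a1 a2 a4 h03 (by linarith) (by linarith)
      have hE : E5 a0 a3 a1 a2 a4 = E5 a0 a1 a2 a3 a4 := by unfold E5; ring
      rwa [hE] at h'
    by_cases h04 : a0 + 2 ≤ a4
    · have h' := compStep ih a0 a4 a1 a2 a3 h04 (by linarith) (by linarith)
      have hE : E5 a0 a4 a1 a2 a3 = E5 a0 a1 a2 a3 a4 := by unfold E5; ring
      rwa [hE] at h'
    by_cases h10 : a1 + 2 ≤ a0
    · have h' := compStep ih a1 a0 a2 a3 a4 h10 (by linarith) (by linarith)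
      have hE : E5 a1 a0 a2 a3 a4 = E5 a0 a1 a2 a3 a4 := by unfold E5; ring
      rwa [hE] at h'
    by_cases h12 : a1 + 2 ≤ a2
    · have h' := compStep ih a1 a2 a0 a3 a4 h12 (by linarith) (by linarith)
      have hE : E5 a1 a2 a0 a3 a4 = E5 a0 a1 a2 a3 a4 := by unfold E5; ring
      rwa [hE] at h'
    by_cases h13 : a1 + 2 ≤ a3
    · have h' := compStep ih a1 a3 a0 a2 a4 h13 (by linarith) (by linarith)
      have hE : E5 a1 a3 a0 a2 a4 = E5 a0 a1 a2 a3 a4 := by unfold E5; ring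
      rwa [hE] at h'
    by_cases h14 : a1 + 2 ≤ a4
    · have h' := compStep ih a1 a4 a0 a2 a3 h14 (by linarith) (by linarith)
      have hE : E5 a1 a4 a0 a2 a3 = E5 a0 a1 a2 a3 a4 := by unfold E5; ring
      rwa [hE] at h'
    by_cases h20 : a2 + 2 ≤ a0
    · have h' := compStep ih a2 a0 a1 a3 a4 h20 (by linarith) (by linarith)
      have hE : E5 a2 a0 a1 a3 a4 = E5 a0 a1 a2 a3 a4 := by unfold E5; ring
      rwa [hE] at h'
    by_cases h21 : a2 + 2 ≤ a1
    · have h' := compStep ih a2 a1 a0 a3 a4 h21 (by linarith) (by linarith)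
      have hE : E5 a2 a1 a0 a3 a4 = E5 a0 a1 a2 a3 a4 := by unfold E5; ring
      rwa [hE] at h'
    by_cases h23 : a2 + 2 ≤ a3
    · have h' := compStep ih a2 a3 a0 a1 a4 h23 (by linarith) (by linarith)
      have hE : E5 a2 a3 a0 a1 a4 = E5 a0 a1 a2 a3 a4 := by unfold E5; ring
      rwa [hE] at h'
    by_cases h24 : a2 + 2 ≤ a4
    · have h' := compStep ih a2 a4 a0 a1 a3 h24 (by linarith) (by linarith)
      have hE : E5 a2 a4 a0 a1 a3 = E5 a0 a1 a2 a3 a4 := by unfold E5; ring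
      rwa [hE] at h'
    by_cases h30 : a3 + 2 ≤ a0
    · have h' := compStep ih a3 a0 a1 a2 a4 h30 (by linarith) (by linarith)
      have hE : E5 a3 a0 a1 a2 a4 = E5 a0 a1 a2 a3 a4 := by unfold E5; ring
      rwa [hE] at h'
    by_cases h31 : a3 + 2 ≤ a1
    · have h' := compStep ih a3 a1 a0 a2 a4 h31 (by linarith) (by linarith)
      have hE : E5 a3 a1 a0 a2 a4 = E5 a0 a1 a2 a3 a4 := by unfold E5; ring
      rwa [hE] at h'
    by_cases h32 : a3 + 2 ≤ a2
    · have h' := compStep ih a3 a2 a0 a1 a4 h32 (by linarith) (by linarith)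
      have hE : E5 a3 a2 a0 a1 a4 = E5 a0 a1 a2 a3 a4 := by unfold E5; ring
      rwa [hE] at h'
    by_cases h34 : a3 + 2 ≤ a4
    · have h' := compStep ih a3 a4 a0 a1 a2 h34 (by linarith) (by linarith)
      have hE : E5 a3 a4 a0 a1 a2 = E5 a0 a1 a2 a3 a4 := by unfold E5; ring
      rwa [hE] at h'
    by_cases h40 : a4 + 2 ≤ a0
    · have h' := compStep ih a4 a0 a1 a2 a3 h40 (by linarith) (by linarith)
      have hE : E5 a4 a0 a1 a2 a3 = E5 a0 a1 a2 a3 a4 := by unfold E5; ring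
      rwa [hE] at h'
    by_cases h41 : a4 + 2 ≤ a1
    · have h' := compStep ih a4 a1 a0 a2 a3 h41 (by linarith) (by linarith)
      have hE : E5 a4 a1 a0 a2 a3 = E5 a0 a1 a2 a3 a4 := by unfold E5; ring
      rwa [hE] at h'
    by_cases h42 : a4 + 2 ≤ a2
    · have h' := compStep ih a4 a2 a0 a1 a3 h42 (by linarith) (by linarith)
      have hE : E5 a4 a2 a0 a1 a3 = E5 a0 a1 a2 a3 a4 := by unfold E5; ring
      rwa [hE] at h'
    by_cases h43 : a4 + 2 ≤ a3
    · have h' := compStep ih a4 a3 a0 a1 a2 h43 (by linarith) (by linarith)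
      have hE : E5 a4 a3 a0 a1 a2 = E5 a0 a1 a2 a3 a4 := by unfold E5; ring
      rwa [hE] at h'
    obtain ⟨v, hv0, hv1, hv2, hv3, hv4⟩ :
        ∃ v, (a0 = v ∨ a0 = v+1) ∧ (a1 = v ∨ a1 = v+1) ∧ (a2 = v ∨ a2 = v+1)
          ∧ (a3 = v ∨ a3 = v+1) ∧ (a4 = v ∨ a4 = v+1) :=
      ⟨a0 ⊓ (a1 ⊓ (a2 ⊓ (a3 ⊓ a4))), by omega⟩
    clear hq ih
    rcases hv0 with h0|h0 <;> rcases hv1 with h1|h1 <;> rcases hv2 with h2|h2 <;>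
      rcases hv3 with h3|h3 <;> rcases hv4 with h4|h4 <;>
      rw [h0, h1, h2, h3, h4] at hs ⊢ <;>
      unfold E5 <;>
      first
      | linarith [bal0 v m (by omega) hm]
      | linarith [bal1 v m (by omega) hm]
      | linarith [bal2 v m (by omega) hm]
      | linarith [bal3 v m (by omega) hm]
      | linarith [bal4 v m (by omega) hm]
      | linarith [bal5 v m (by omega) hm]

def col {n : ℕ} (v : Fin n) : Fin 5 := ⟨v.val % 5, Nat.mod_lt _ (by norm_num)⟩

def ctrip : Finset ((Fin 5 × Fin 5) × Fin 5) :=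
  univ.filter (fun p => p.1.1 < p.1.2 ∧ p.1.2 < p.2)

def DS {n : ℕ} (S : Finset (Fin n)) : Finset ((Fin n × Fin n) × Fin n) :=
  ((S ×ˢ S) ×ˢ S).filter (fun p => col p.1.1 < col p.1.2 ∧ col p.1.2 < col p.2)

def cnt {n : ℕ} (S : Finset (Fin n)) (i : Fin 5) : ℕ :=
  (S.filter (fun v => col v = i)).card

def RB {n : ℕ} (S : Finset (Fin n)) : Finset (Finset (Fin n)) :=
  (powersetCard 3 S).filter (fun t => (t.image col).card = 3)

lemma cnt_sum {n : ℕ} (S : Finset (Fin n)) : ∑ i, cnt S i = S.card :=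
  (Finset.card_eq_sum_card_fiberwise (fun v _ => mem_univ (col v))).symm

lemma DS_card {n : ℕ} (S : Finset (Fin n)) :
    (DS S).card = ∑ p ∈ ctrip, cnt S p.1.1 * cnt S p.1.2 * cnt S p.2 := by
  rw [Finset.card_eq_sum_card_fiberwise
    (f := fun p : (Fin n × Fin n) × Fin n => ((col p.1.1, col p.1.2), col p.2)) (t := ctrip)
    (fun p hp => by
      simp only [DS, mem_filter, ctrip, mem_univ, true_and] at hp ⊢
      exact Finset.mem_coe.mpr (Finset.mem_filter.mpr ⟨mem_univ _, (Finset.mem_filter.mp hp).2⟩))]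
  refine Finset.sum_congr rfl (fun b hb => ?_)
  have : (DS S).filter
      (fun p : (Fin n × Fin n) × Fin n => ((col p.1.1, col p.1.2), col p.2) = b)
      = ((S.filter (fun v => col v = b.1.1)) ×ˢ (S.filter (fun v => col v = b.1.2)))
        ×ˢ (S.filter (fun v => col v = b.2)) := by
    simp only [ctrip, mem_filter, mem_univ, true_and] at hb
    ext p
    simp only [DS, mem_filter, mem_product, Prod.ext_iff]
    constructor
    · rintro ⟨⟨⟨⟨h1, h2⟩, h3⟩, _, _⟩, ⟨e1, e2⟩, e3⟩
      exact ⟨⟨⟨h1, e1⟩, h2, e2⟩, h3, e3⟩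
    · rintro ⟨⟨⟨h1, e1⟩, h2, e2⟩, h3, e3⟩
      refine ⟨⟨⟨⟨h1, h2⟩, h3⟩, ?_, ?_⟩, ⟨e1, e2⟩, e3⟩
      · rw [e1, e2]; exact hb.1
      · rw [e2, e3]; exact hb.2
  rw [this, card_product, card_product]
  rfl

lemma ctrip_eq : ctrip = {((0,1),2), ((0,1),3), ((0,1),4), ((0,2),3), ((0,2),4),
    ((0,3),4), ((1,2),3), ((1,2),4), ((1,3),4), ((2,3),4)} := by decide

lemma DS_eq_E5 {n : ℕ} (S : Finset (Fin n)) :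
    (DS S).card = E5 (cnt S 0) (cnt S 1) (cnt S 2) (cnt S 3) (cnt S 4) := by
  rw [DS_card, ctrip_eq]
  rw [Finset.sum_insert (by decide), Finset.sum_insert (by decide),
    Finset.sum_insert (by decide), Finset.sum_insert (by decide),
    Finset.sum_insert (by decide), Finset.sum_insert (by decide),
    Finset.sum_insert (by decide), Finset.sum_insert (by decide),
    Finset.sum_insert (by decide), Finset.sum_singleton]
  unfold E5
  ring

lemma tripleq {n : ℕ} (x y z x' y' z' : Fin n) (h1 : col x < col y) (h2 : col y < col z)
    (h1' : col x' < col y') (h2' : col y' < col z')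
    (h : ({x, y, z} : Finset (Fin n)) = {x', y', z'}) : x = x' ∧ y = y' ∧ z = z' := by
  have hx : x' = x ∨ x' = y ∨ x' = z := by
    have : x' ∈ ({x, y, z} : Finset (Fin n)) := by rw [h]; simp
    simpa using this
  have hy : y' = x ∨ y' = y ∨ y' = z := by
    have : y' ∈ ({x, y, z} : Finset (Fin n)) := by rw [h]; simp
    simpa using this
  have hz : z' = x ∨ z' = y ∨ z' = z := by
    have : z' ∈ ({x, y, z} : Finset (Fin n)) := by rw [h]; simp
    simpa using this
  have v1 : (col x).val < (col y).val := h1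
  have v2 : (col y).val < (col z).val := h2
  have v1' : (col x').val < (col y').val := h1'
  have v2' : (col y').val < (col z').val := h2'
  rcases hx with hx|hx|hx <;> rcases hy with hy|hy|hy <;> rcases hz with hz|hz|hz <;>
    first
    | exact ⟨hx.symm, hy.symm, hz.symm⟩
    | (exfalso
       have e1 : (col x').val = (col (x' : Fin n)).val := rfl
       have ex := congrArg (fun t => (col (t : Fin n)).val) hx
       have ey := congrArg (fun t => (col (t : Fin n)).val) hy
       have ez := congrArg (fun t => (col (t : Fin n)).val) hz
       omega)

lemma phi_mem {n : ℕ} {S : Finset (Fin n)} {p : (Fin n × Fin n) × Fin n} (hp : p ∈ DS S) :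
    ({p.1.1, p.1.2, p.2} : Finset (Fin n)) ∈ RB S := by
  obtain ⟨⟨⟨h1, h2⟩, h3⟩, hc1, hc2⟩ :
      ((p.1.1 ∈ S ∧ p.1.2 ∈ S) ∧ p.2 ∈ S) ∧ col p.1.1 < col p.1.2 ∧ col p.1.2 < col p.2 := by
    simpa [DS, mem_filter, mem_product] using hp
  have hne1 : p.1.1 ≠ p.1.2 := fun e => absurd (e ▸ hc1) (lt_irrefl _)
  have hne2 : p.1.1 ≠ p.2 := fun e => absurd (e ▸ (hc1.trans hc2)) (lt_irrefl _)
  have hne3 : p.1.2 ≠ p.2 := fun e => absurd (e ▸ hc2) (lt_irrefl _)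
  have hcard : ({p.1.1, p.1.2, p.2} : Finset (Fin n)).card = 3 :=
    Finset.card_eq_three.mpr ⟨_, _, _, hne1, hne2, hne3, rfl⟩
  have himg : (({p.1.1, p.1.2, p.2} : Finset (Fin n)).image col).card = 3 := by
    rw [Finset.image_insert, Finset.image_insert, Finset.image_singleton]
    exact Finset.card_eq_three.mpr ⟨_, _, _, ne_of_lt hc1, ne_of_lt (hc1.trans hc2),
      ne_of_lt hc2, rfl⟩
  refine Finset.mem_filter.mpr ⟨Finset.mem_powersetCard.mpr ⟨?_, hcard⟩, himg⟩
  intro a ha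
  simp only [Finset.mem_insert, Finset.mem_singleton] at ha
  rcases ha with rfl|rfl|rfl <;> assumption

lemma DS_le_RB {n : ℕ} (S : Finset (Fin n)) : (DS S).card ≤ (RB S).card := by
  apply Finset.card_le_card_of_injOn (fun p => {p.1.1, p.1.2, p.2}) (fun p hp => phi_mem hp)
  intro p hp q hq hpq
  simp only [Finset.coe_filter, Set.mem_setOf_eq, DS, mem_coe, mem_filter] at hp hq
  obtain ⟨h1, h2⟩ := tripleq p.1.1 p.1.2 p.2 q.1.1 q.1.2 q.2 hp.2.1 hp.2.2 hq.2.1 hq.2.2 hpq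
  obtain ⟨h3, h4⟩ := h2
  exact Prod.ext (Prod.ext h1 h3) h4

lemma RB_le_DS {n : ℕ} (S : Finset (Fin n)) : (RB S).card ≤ (DS S).card := by
  apply Finset.card_le_card_of_surjOn (fun p => {p.1.1, p.1.2, p.2})
  intro t ht
  simp only [coe_filter, Set.mem_setOf_eq, RB, mem_coe, mem_filter,
    Finset.mem_powersetCard] at ht
  obtain ⟨⟨hsub, hcard⟩, himg⟩ := ht
  obtain ⟨x, y, z, hxy, hxz, hyz, rfl⟩ := Finset.card_eq_three.mp hcard
  have hx : x ∈ S := hsub (by simp)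
  have hy : y ∈ S := hsub (by simp)
  have hz : z ∈ S := hsub (by simp)
  have himg' : ({col x, col y, col z} : Finset (Fin 5)).card = 3 := by
    rw [Finset.image_insert, Finset.image_insert, Finset.image_singleton] at himg
    exact himg
  have hcxy : col x ≠ col y := by
    intro e
    rw [e] at himg'
    rw [show ({col y, col y, col z} : Finset (Fin 5)) = {col y, col z} from by
      ext a; simp; try tauto] at himg'
    have := Finset.card_insert_le (col y) ({col z} : Finset (Fin 5))
    simp at this
    omega
  have hcxz : col x ≠ col z := by
    intro e
    rw [e] at himg'
    rw [show ({col z, col y, col z} : Finset (Fin 5)) = {col y, col z} from by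
      ext a; simp; try tauto] at himg'
    have := Finset.card_insert_le (col y) ({col z} : Finset (Fin 5))
    simp at this
    omega
  have hcyz : col y ≠ col z := by
    intro e
    rw [e] at himg'
    rw [show ({col x, col z, col z} : Finset (Fin 5)) = {col x, col z} from by
      ext a; simp; try tauto] at himg'
    have := Finset.card_insert_le (col x) ({col z} : Finset (Fin 5))
    simp at this
    omega
  have hDS : ∀ a b c : Fin n, a ∈ S → b ∈ S → c ∈ S → col a < col b → col b < col c →
      (((a, b), c) : (Fin n × Fin n) × Fin n) ∈ (DS S : Finset _) := by
    intro a b c ha hb hc h1 h2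
    simp [DS, mem_filter, mem_product, ha, hb, hc, h1, h2]
  rcases lt_trichotomy (col x) (col y) with h1|h1|h1
  · rcases lt_trichotomy (col y) (col z) with h2|h2|h2
    · exact ⟨((x, y), z), by exact_mod_cast hDS x y z hx hy hz h1 h2, rfl⟩
    · exact absurd h2 hcyz
    · rcases lt_trichotomy (col x) (col z) with h3|h3|h3
      · exact ⟨((x, z), y), by exact_mod_cast hDS x z y hx hz hy h3 h2,
          by ext a; simp; tauto⟩
      · exact absurd h3 hcxz
      · exact ⟨((z, x), y), by exact_mod_cast hDS z x y hz hx hy h3 h1,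
          by ext a; simp; tauto⟩
  · exact absurd h1 hcxy
  · rcases lt_trichotomy (col x) (col z) with h2|h2|h2
    · exact ⟨((y, x), z), by exact_mod_cast hDS y x z hy hx hz h1 h2,
        by ext a; simp; tauto⟩
    · exact absurd h2 hcxz
    · rcases lt_trichotomy (col y) (col z) with h3|h3|h3
      · exact ⟨((y, z), x), by exact_mod_cast hDS y z x hy hz hx h3 h2,
          by ext a; simp; tauto⟩
      · exact absurd h3 hcyz
      · exact ⟨((z, y), x), by exact_mod_cast hDS z y x hz hy hx h3 h1,
          by ext a; simp; tauto⟩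

lemma cnt_univ_ge {n : ℕ} (i : Fin 5) : n/5 ≤ cnt (univ : Finset (Fin n)) i := by
  have h5 : 0 < 5 := by norm_num
  have : (univ : Finset (Fin (n/5))).card ≤ cnt (univ : Finset (Fin n)) i := by
    apply Finset.card_le_card_of_injOn
      (fun j => (⟨5 * j.val + i.val, by have := j.isLt; have := i.isLt; omega⟩ : Fin n))
    · intro j _
      simp only [cnt, coe_filter, mem_filter, mem_univ, true_and, Set.mem_setOf_eq]
      apply Fin.ext
      show (5 * j.val + i.val) % 5 = i.val
      have := i.isLt
      omega
    · intro a _ b _ hab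
      have : 5 * a.val + i.val = 5 * b.val + i.val := congrArg Fin.val hab
      exact Fin.ext (by omega)
  simpa using this

lemma six_choose_three (n : ℕ) : 6 * n.choose 3 = n * (n-1) * (n-2) := by
  have h := Nat.descFactorial_eq_factorial_mul_choose n 3
  have h2 : n.descFactorial 3 = (n-2) * ((n-1) * n) := by
    simp [Nat.descFactorial]
  have h3 : Nat.factorial 3 = 6 := by norm_num [Nat.factorial]
  rw [h3] at h
  rw [← h, h2]
  ring

lemma mainIneq (v k : ℕ) (hv : 2 ≤ v) (hk : k ≤ 4) :
    2 * ((5*v+k) * (5*v+k-1) * (5*v+k-2)) ≤ 25*(10*v^3+6*v^2*k) := by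
  obtain ⟨w, rfl⟩ : ∃ w, v = w + 2 := ⟨v-2, by omega⟩
  rw [show 5*(w+2)+k-1 = 5*w+9+k from by omega, show 5*(w+2)+k-2 = 5*w+8+k from by omega]
  interval_cases k <;> nlinarith [sq_nonneg w, w.zero_le]

lemma RB_univ_big {n : ℕ} (hn : 10 ≤ n) :
    2 * (n * (n-1) * (n-2)) ≤ 25 * (DS (univ : Finset (Fin n))).card := by
  rw [DS_eq_E5]
  obtain ⟨e0, he0⟩ : ∃ e, cnt (univ : Finset (Fin n)) 0 = n/5 + e :=
    ⟨_, (Nat.add_sub_cancel' (cnt_univ_ge 0)).symm⟩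
  obtain ⟨e1, he1⟩ : ∃ e, cnt (univ : Finset (Fin n)) 1 = n/5 + e :=
    ⟨_, (Nat.add_sub_cancel' (cnt_univ_ge 1)).symm⟩
  obtain ⟨e2, he2⟩ : ∃ e, cnt (univ : Finset (Fin n)) 2 = n/5 + e :=
    ⟨_, (Nat.add_sub_cancel' (cnt_univ_ge 2)).symm⟩
  obtain ⟨e3, he3⟩ : ∃ e, cnt (univ : Finset (Fin n)) 3 = n/5 + e :=
    ⟨_, (Nat.add_sub_cancel' (cnt_univ_ge 3)).symm⟩
  obtain ⟨e4, he4⟩ : ∃ e, cnt (univ : Finset (Fin n)) 4 = n/5 + e :=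
    ⟨_, (Nat.add_sub_cancel' (cnt_univ_ge 4)).symm⟩
  have hsum : ∑ i, cnt (univ : Finset (Fin n)) i = n := by
    rw [cnt_sum, card_univ, Fintype.card_fin]
  rw [Fin.sum_univ_five, he0, he1, he2, he3, he4] at hsum
  rw [he0, he1, he2, he3, he4]
  obtain ⟨v, hv⟩ : ∃ v, n/5 = v := ⟨_, rfl⟩
  rw [hv]
  have hE : E5 (v+e0) (v+e1) (v+e2) (v+e3) (v+e4)
      = 10*v^3 + 6*v^2*(e0+e1+e2+e3+e4)
        + (3*v*(e0*e1+e0*e2+e0*e3+e0*e4+e1*e2+e1*e3+e1*e4+e2*e3+e2*e4+e3*e4)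
          + (e0*e1*e2+e0*e1*e3+e0*e1*e4+e0*e2*e3+e0*e2*e4+e0*e3*e4
            +e1*e2*e3+e1*e2*e4+e1*e3*e4+e2*e3*e4)) := by
    unfold E5; ring
  rw [hE]
  obtain ⟨k, hk⟩ : ∃ k, e0+e1+e2+e3+e4 = k := ⟨_, rfl⟩
  rw [hk]
  have hkn : n = 5*v + k := by omega
  have hk4 : k ≤ 4 := by omega
  have hv2 : 2 ≤ v := by omega
  have main : 2 * (n * (n-1) * (n-2)) ≤ 25 * (10*v^3 + 6*v^2*k) := by
    rw [hkn]
    exact mainIneq v k hv2 hk4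
  refine le_trans main ?_
  apply Nat.mul_le_mul_left
  exact Nat.le_add_right _ _

lemma induced_small (m : ℕ) (hm : 73 ≤ m) {n : ℕ} (S : Finset (Fin n)) (hS : S.card = m) :
    2 * (RB S).card < m.choose 3 := by
  have h1 : (RB S).card ≤ (DS S).card := RB_le_DS S
  have h2 := DS_eq_E5 S
  have hsum : cnt S 0 + cnt S 1 + cnt S 2 + cnt S 3 + cnt S 4 = m := by
    have h := cnt_sum S
    rw [Fin.sum_univ_five, hS] at h
    exact h
  have h3 := key5 m hm (cnt S 0^2 + cnt S 1^2 + cnt S 2^2 + cnt S 3^2 + cnt S 4^2)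
    (cnt S 0) (cnt S 1) (cnt S 2) (cnt S 3) (cnt S 4) hsum le_rfl
  have h6 := six_choose_three m
  linarith

lemma powC (n : ℕ) : (powersetCard 3 (univ : Finset (Fin n))).card = n.choose 3 := by
  rw [Finset.card_powersetCard, card_univ, Fintype.card_fin]

lemma good_bound (m f : ℕ) (hm : 73 ≤ m) (hf0 : 0 < f) (hf : f < m.choose 3)
    (n : ℕ) (hn : 10 ≤ n) :
    25 * ((Finset.range (n.choose 3 + 1)).filter (fun e => PairArrows 3 n e m f)).card
      ≤ 13 * n.choose 3 := by
  classical
  have hRBcard : (RB (univ : Finset (Fin n))).card ≤ n.choose 3 := by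
    calc (RB (univ : Finset (Fin n))).card
        ≤ (powersetCard 3 (univ : Finset (Fin n))).card := card_le_card (filter_subset _ _)
      _ = n.choose 3 := powC n
  have hRb_le : (DS (univ : Finset (Fin n))).card ≤ (RB (univ : Finset (Fin n))).card :=
    DS_le_RB univ
  have h12 : 12 * n.choose 3 ≤ 25 * (DS (univ : Finset (Fin n))).card := by
    have hbig := RB_univ_big hn
    have h6 := six_choose_three n
    linarith
  have hsub : ((Finset.range (n.choose 3 + 1)).filter (fun e => PairArrows 3 n e m f)).card
      ≤ n.choose 3 - (DS (univ : Finset (Fin n))).card := by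
    by_cases hcase : m.choose 3 ≤ 2 * f
    · -- dense f: sparse graphs kill small e
      have hsubset : (Finset.range (n.choose 3 + 1)).filter (fun e => PairArrows 3 n e m f)
          ⊆ (Finset.range (n.choose 3 + 1)).filter
              (fun e => (DS (univ : Finset (Fin n))).card < e) := by
        intro e he
        simp only [mem_filter, mem_range] at he ⊢
        refine ⟨he.1, ?_⟩
        by_contra hle
        push_neg at hle
        obtain ⟨G, hGsub, hGcard⟩ := Finset.exists_subset_card_eq (le_trans hle hRb_le)
        obtain ⟨S, hSm, hSf⟩ := he.2 G (fun s hs => by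
          have h := hGsub hs
          simp only [RB, mem_filter, Finset.mem_powersetCard] at h
          exact h.1.2) hGcard
        have hind : G.filter (fun t => t ⊆ S) ⊆ RB S := by
          intro t ht
          simp only [mem_filter] at ht
          have h := hGsub ht.1
          simp only [RB, mem_filter, Finset.mem_powersetCard] at h ⊢
          exact ⟨⟨ht.2, h.1.2⟩, h.2⟩
        have hc := card_le_card hind
        have hsmall := induced_small m hm S hSm
        omega
      have heq : (Finset.range (n.choose 3 + 1)).filter
            (fun e => (DS (univ : Finset (Fin n))).card < e)
          = Finset.Ico ((DS (univ : Finset (Fin n))).card + 1) (n.choose 3 + 1) := by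
        ext a
        simp only [mem_filter, mem_range, Finset.mem_Ico]
        omega
      have := card_le_card hsubset
      rw [heq, Nat.card_Ico] at this
      omega
    · -- sparse f: dense graphs kill large e
      push_neg at hcase
      have hsubset : (Finset.range (n.choose 3 + 1)).filter (fun e => PairArrows 3 n e m f)
          ⊆ Finset.range (n.choose 3 - (DS (univ : Finset (Fin n))).card) := by
        intro e he
        simp only [mem_filter, mem_range] at he ⊢
        by_contra hle
        push_neg at hle
        have he1 : e ≤ n.choose 3 := by omega
        set NR := (powersetCard 3 (univ : Finset (Fin n))) \ RB (univ : Finset (Fin n))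
          with hNRdef
        have hNRcard : NR.card = n.choose 3 - (RB (univ : Finset (Fin n))).card := by
          rw [hNRdef, card_sdiff_of_subset (show RB (univ : Finset (Fin n)) ⊆ powersetCard 3 univ
            from filter_subset _ _), powC]
        have hxle : e - NR.card ≤ (RB (univ : Finset (Fin n))).card := by omega
        obtain ⟨X, hXsub, hXcard⟩ := Finset.exists_subset_card_eq hxle
        have hdisj : Disjoint NR X :=
          Disjoint.mono_right hXsub sdiff_disjoint
        have hNRe : NR.card ≤ e := by omega
        have hGcard : (NR ∪ X).card = e := by
          rw [card_union_of_disjoint hdisj, hXcard]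
          omega
        have hGcards : ∀ s ∈ NR ∪ X, s.card = 3 := by
          intro s hs
          rcases Finset.mem_union.mp hs with hs | hs
          · have h := (Finset.mem_sdiff.mp hs).1
            exact (Finset.mem_powersetCard.mp h).2
          · have h := hXsub hs
            simp only [RB, mem_filter, Finset.mem_powersetCard] at h
            exact h.1.2
        obtain ⟨S, hSm, hSf⟩ := he.2 (NR ∪ X) hGcards hGcard
        have hmono : NR.filter (fun t => t ⊆ S) ⊆ (NR ∪ X).filter (fun t => t ⊆ S) :=
          Finset.filter_subset_filter _ Finset.subset_union_left
        have hNRS : (powersetCard 3 S) \ RB S ⊆ NR.filter (fun t => t ⊆ S) := by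
          intro t ht
          obtain ⟨ht1, ht2⟩ := Finset.mem_sdiff.mp ht
          obtain ⟨htS, htc⟩ := Finset.mem_powersetCard.mp ht1
          refine Finset.mem_filter.mpr ⟨Finset.mem_sdiff.mpr ⟨?_, ?_⟩, htS⟩
          · exact Finset.mem_powersetCard.mpr ⟨Finset.subset_univ _, htc⟩
          · intro hmem
            simp only [RB, mem_filter] at hmem
            exact ht2 (Finset.mem_filter.mpr ⟨ht1, hmem.2⟩)
        have hsdc : ((powersetCard 3 S) \ RB S).card
            = m.choose 3 - (RB S).card := by
          rw [card_sdiff_of_subset (show RB S ⊆ powersetCard 3 S from filter_subset _ _),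
            Finset.card_powersetCard, hSm]
        have hc1 := card_le_card hNRS
        have hc2 := card_le_card hmono
        have hsmall := induced_small m hm S hSm
        have hRBS_le : (RB S).card ≤ (powersetCard 3 S).card := card_le_card (filter_subset _ _)
        have hpSc : (powersetCard 3 S).card = m.choose 3 := by
          rw [Finset.card_powersetCard, hSm]
        omega
      have := card_le_card hsubset
      rw [Finset.card_range] at this
      omega
  have hRbC : (DS (univ : Finset (Fin n))).card ≤ n.choose 3 := le_trans hRb_le hRBcard
  omega

theorem sigma_three_le_thirteen_twentyfifths (m f : ℕ) (hm : 73 ≤ m)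
    (hf0 : 0 < f) (hf : f < m.choose 3) :
    sigmaR 3 m f ≤ 13 / 25 := by
  have hnonneg : ∀ n : ℕ,
      (0:ℝ) ≤ (((Finset.range (n.choose 3 + 1)).filter
          (fun e => PairArrows 3 n e m f)).card : ℝ) / (n.choose 3 : ℝ) :=
    fun n => div_nonneg (Nat.cast_nonneg _) (Nat.cast_nonneg _)
  refine Filter.limsup_le_of_le (Filter.isCoboundedUnder_le_of_le Filter.atTop hnonneg) ?_
  refine Filter.eventually_atTop.mpr ⟨10, fun n hn => ?_⟩
  have hCpos : 0 < n.choose 3 := Nat.choose_pos (by omega)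
  have hCpos' : (0:ℝ) < (n.choose 3 : ℝ) := by exact_mod_cast hCpos
  rw [div_le_div_iff₀ hCpos' (by norm_num : (0:ℝ) < 25)]
  have hb := good_bound m f hm hf0 hf n hn
  have : (((Finset.range (n.choose 3 + 1)).filter
      (fun e => PairArrows 3 n e m f)).card : ℝ) * 25 ≤ 13 * (n.choose 3 : ℝ) := by
    exact_mod_cast (by omega : ((Finset.range (n.choose 3 + 1)).filter
      (fun e => PairArrows 3 n e m f)).card * 25 ≤ 13 * n.choose 3)
  linarith
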